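/- Let n ≥ 1 and let α, β ∈ ℂ be such that α+β is not a nonpositive integer and α ∉ {1−k : 1 ≤ k ≤ n−1} and α+β ∉ {1−k : 1 ≤ k ≤ n−1}. Then for every p = (p₁,…,p_n) ∈ ℂⁿ and every r ∈ (0,1): det( ₂F₁(α, β+p_i+j ; α+β ; 1−r²) )_{1≤i,j≤n} = (−1)^{n(n−1)/2}·(1−r²)^{n(n−1)/2}·∏_{k=1}^{n−1} ( (α+k−1)/(α+β+k−1) )^{n−k} · det( ₂F₁(α+n−j, β+p_i+n ; α+β+n−j ; 1−r²) )_{1≤i,j≤n}. -/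
import Mathlib


open MeasureTheory Complex Matrix Filter
open scoped ENNReal Real ComplexOrder

noncomputable section

/-- The Pochhammer symbol `(a)_k = a(a+1)⋯(a+k−1)`. -/
def poch (a : ℂ) (k : ℕ) : ℂ := ∏ i ∈ Finset.range k, (a + (i : ℂ))

/-- The Gauss hypergeometric series `₂F₁(a,b;c;x)`. -/
def hyp2F1 (a b c x : ℂ) : ℂ :=
  ∑' k : ℕ, poch a k * poch b k / (poch c k * (Nat.factorial k : ℂ)) * x ^ k

/-- `ε(k) = 1` if `k ≥ 0`, `−1` if `k < 0`. -/
def epsZ (k : ℤ) : ℤ := if 0 ≤ k then 1 else -1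

/-- The radial function `φ^ν_{λ,k}(r)`. -/
def phiNu (n : ℕ) (ν : ℤ) (l : ℂ) (k : ℤ) (r : ℝ) : ℂ :=
  (r : ℂ) ^ k.natAbs * ((1 - (r : ℂ) ^ 2) ^ ((Complex.I * l + (n : ℂ) - (ν : ℂ)) / 2))
    * (poch ((Complex.I * l + (n : ℂ) + ((epsZ k * ν : ℤ) : ℂ)) / 2) k.natAbs
        / (Nat.factorial k.natAbs : ℂ))
    * hyp2F1 ((Complex.I * l + (n : ℂ) - ((epsZ k * ν : ℤ) : ℂ)) / 2)
        ((Complex.I * l + (n : ℂ) + ((epsZ k * ν : ℤ) : ℂ)) / 2 + (k.natAbs : ℂ))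
        (1 + (k.natAbs : ℂ)) ((r : ℂ) ^ 2)

/-- `d_m = ∏_{i<j} (1 + (m_i − m_j)/(j − i))`. -/
def dSig (n : ℕ) (m : Fin n → ℤ) : ℝ :=
  ∏ q ∈ Finset.univ.filter (fun q : Fin n × Fin n => q.1 < q.2),
    (1 + ((m q.1 - m q.2 : ℤ) : ℝ) / ((q.2 : ℕ) - (q.1 : ℕ) : ℝ))

/-- The generalized spherical function `Φ^ν_{λ,m}(r)`. -/
def PhiSph (n : ℕ) (ν : ℤ) (l : ℂ) (m : Fin n → ℤ) (r : ℝ) : ℂ :=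
  ((Nat.factorial n : ℂ) / (dSig n m : ℂ))
    * Matrix.det (Matrix.of fun i j : Fin n => phiNu n ν l (m i - (i : ℕ) + (j : ℕ)) r)

namespace HypAux

open scoped Topology

/-- The summand of the hypergeometric series. -/
def hterm (a b c x : ℂ) (k : ℕ) : ℂ :=
  poch a k * poch b k / (poch c k * (Nat.factorial k : ℂ)) * x ^ k

lemma hyp2F1_eq (a b c x : ℂ) : hyp2F1 a b c x = ∑' k, hterm a b c x k := rfl

lemma poch_zero (a : ℂ) : poch a 0 = 1 := by simp [poch]

lemma poch_succ (a : ℂ) (k : ℕ) : poch a (k+1) = poch a k * (a + k) :=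
  Finset.prod_range_succ _ _

lemma poch_succ' (a : ℂ) (k : ℕ) : poch a (k+1) = a * poch (a+1) k := by
  rw [poch, Finset.prod_range_succ']
  simp only [Nat.cast_zero, add_zero, poch]
  rw [mul_comm]
  congr 1
  refine Finset.prod_congr rfl fun i _ => ?_
  push_cast; ring

lemma poch_ne_zero {c : ℂ} (h : ∀ k : ℕ, c + k ≠ 0) (k : ℕ) : poch c k ≠ 0 :=
  Finset.prod_ne_zero_iff.mpr fun i _ => h i

lemma tendsto_div_add (d e : ℂ) :
    Tendsto (fun k : ℕ => d / ((k : ℂ) + e)) atTop (𝓝 0) := by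
  rw [tendsto_zero_iff_norm_tendsto_zero]
  have hden : Tendsto (fun k : ℕ => ‖(k : ℂ) + e‖) atTop atTop := by
    apply tendsto_atTop_mono (fun k : ℕ => ?_)
      (tendsto_atTop_add_const_right atTop (-‖e‖) tendsto_natCast_atTop_atTop)
    have := norm_sub_norm_le ((k : ℂ)) (-e)
    simpa [Complex.norm_natCast, sub_neg_eq_add] using this
  have := (tendsto_const_nhds (x := ‖d‖) (f := atTop)).div_atTop hden
  simpa [norm_div] using this

lemma hterm_succ {c : ℂ} (a b x : ℂ) (hc : ∀ k : ℕ, c + k ≠ 0) (k : ℕ) :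
    hterm a b c x (k+1)
      = hterm a b c x k * ((a + k) * (b + k) * x / ((c + k) * ((k : ℂ) + 1))) := by
  have h1 : poch c k ≠ 0 := poch_ne_zero hc k
  have h2 : c + (k : ℂ) ≠ 0 := hc k
  have h3 : ((Nat.factorial k : ℕ) : ℂ) ≠ 0 := by
    exact_mod_cast (Nat.factorial_pos k).ne'
  have h4 : ((k : ℂ) + 1) ≠ 0 := by
    have : (((k+1 : ℕ)) : ℂ) ≠ 0 := by exact_mod_cast (Nat.succ_ne_zero k)
    push_cast at this; exact this
  rw [hterm, hterm, poch_succ, poch_succ, poch_succ, Nat.factorial_succ]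
  push_cast
  field_simp
  ring

lemma summable_hterm {c : ℂ} (a b x : ℂ) (hx : ‖x‖ < 1) (hc : ∀ k : ℕ, c + k ≠ 0) :
    Summable (hterm a b c x) := by
  have hT : Tendsto (fun k : ℕ => (a + k) * (b + k) * x / ((c + k) * ((k : ℂ) + 1)))
      atTop (𝓝 x) := by
    have t1 : Tendsto (fun k : ℕ => (a + (k : ℂ)) / ((k : ℂ) + 1)) atTop (𝓝 1) := by
      have := (tendsto_div_add (a - 1) 1).const_add 1
      simp only [add_zero] at this
      refine this.congr fun k => ?_
      have h4 : ((k : ℂ) + 1) ≠ 0 := by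
        have : (((k+1 : ℕ)) : ℂ) ≠ 0 := by exact_mod_cast (Nat.succ_ne_zero k)
        push_cast at this; exact this
      field_simp
      ring
    have t2 : Tendsto (fun k : ℕ => (b + (k : ℂ)) / (c + (k : ℂ))) atTop (𝓝 1) := by
      have := (tendsto_div_add (b - c) c).const_add 1
      simp only [add_zero] at this
      refine this.congr fun k => ?_
      have := hc k
      rw [add_comm (k : ℂ) c]
      field_simp
      ring
    have := (t1.mul t2).mul_const x
    simp only [one_mul] at this
    refine this.congr fun k => ?_
    rw [div_mul_div_comm, div_mul_eq_mul_div, mul_comm ((k:ℂ)+1) (c + (k:ℂ))]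
  set y : ℝ := (1 + ‖x‖) / 2 with hy
  have hxy : ‖x‖ < y := by rw [hy]; linarith
  have hy1 : y < 1 := by rw [hy]; linarith
  apply summable_of_ratio_norm_eventually_le hy1
  have hev : ∀ᶠ k : ℕ in atTop,
      ‖(a + (k:ℂ)) * (b + k) * x / ((c + k) * ((k : ℂ) + 1))‖ < y :=
    (hT.norm).eventually_lt_const hxy
  filter_upwards [hev] with k hk
  rw [hterm_succ a b x hc k, norm_mul]
  have h0 : (0:ℝ) ≤ ‖hterm a b c x k‖ := norm_nonneg _
  calc ‖hterm a b c x k‖ * ‖(a + (k:ℂ)) * (b + k) * x / ((c + k) * ((k : ℂ) + 1))‖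
      ≤ ‖hterm a b c x k‖ * y := mul_le_mul_of_nonneg_left hk.le h0
    _ = y * ‖hterm a b c x k‖ := mul_comm _ _

/-- The contiguous relation `₂F₁(a,b+1;c;x) = ₂F₁(a,b;c;x) + (ax/c) ₂F₁(a+1,b+1;c+1;x)`. -/
lemma contig {c : ℂ} (a b x : ℂ) (hx : ‖x‖ < 1) (hc : ∀ k : ℕ, c + k ≠ 0) :
    hyp2F1 a (b+1) c x = hyp2F1 a b c x + a * x / c * hyp2F1 (a+1) (b+1) (c+1) x := by
  have hc1 : ∀ k : ℕ, (c + 1) + k ≠ 0 := fun k => by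
    have := hc (k+1); push_cast at this; intro h; apply this; linear_combination h
  have S1 : Summable (hterm a (b+1) c x) := summable_hterm a (b+1) x hx hc
  have S2 : Summable (hterm a b c x) := summable_hterm a b x hx hc
  have key : ∀ k : ℕ, hterm a (b+1) c x (k+1) - hterm a b c x (k+1)
      = a * x / c * hterm (a+1) (b+1) (c+1) x k := by
    intro k
    have h1 : poch (c+1) k ≠ 0 := poch_ne_zero hc1 k
    have h2 : c ≠ 0 := by have := hc 0; simpa using this
    have h3 : ((Nat.factorial k : ℕ) : ℂ) ≠ 0 := by
      exact_mod_cast (Nat.factorial_pos k).ne'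
    have h4 : ((k : ℂ) + 1) ≠ 0 := by
      have : (((k+1 : ℕ)) : ℂ) ≠ 0 := by exact_mod_cast (Nat.succ_ne_zero k)
      push_cast at this; exact this
    rw [hterm, hterm, hterm, poch_succ' a, poch_succ (b+1), poch_succ' b,
      poch_succ' c, Nat.factorial_succ]
    push_cast
    field_simp
    ring
  have hsub : hyp2F1 a (b+1) c x - hyp2F1 a b c x
      = ∑' k, (hterm a (b+1) c x k - hterm a b c x k) := by
    rw [hyp2F1_eq, hyp2F1_eq, ← Summable.tsum_sub S1 S2]
  have h0 : hterm a (b+1) c x 0 - hterm a b c x 0 = 0 := by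
    simp [hterm, poch_zero]
  have key2 : hyp2F1 a (b+1) c x - hyp2F1 a b c x
      = a * x / c * hyp2F1 (a+1) (b+1) (c+1) x := by
    rw [hsub, Summable.tsum_eq_zero_add (S1.sub S2), h0, zero_add]
    calc (∑' k : ℕ, (hterm a (b+1) c x (k+1) - hterm a b c x (k+1)))
        = ∑' k : ℕ, a * x / c * hterm (a+1) (b+1) (c+1) x k := tsum_congr key
      _ = a * x / c * hyp2F1 (a+1) (b+1) (c+1) x := by
          rw [tsum_mul_left, hyp2F1_eq]
  linear_combination key2

/-- single step factor -/
def fstep (α β x : ℂ) (k : ℕ) : ℂ := -x * (α + k) / (α + β + k)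

def cst (α β x : ℂ) (m : ℕ) : ℂ := ∏ k ∈ Finset.range m, fstep α β x k

lemma cst_succ (α β x : ℂ) (m : ℕ) :
    cst α β x (m+1) = cst α β x m * fstep α β x m := Finset.prod_range_succ _ _

/-- scaled hypergeometric entry -/
def g (α β x : ℂ) (m : ℕ) (b : ℂ) : ℂ :=
  cst α β x m * hyp2F1 (α + (m : ℂ)) b (α + β + (m : ℂ)) x

lemma gstep (α β x : ℂ) (hx : ‖x‖ < 1) (hαβ : ∀ k : ℕ, α + β + (k:ℂ) ≠ 0)
    (t s : ℕ) (q : ℂ) :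
    g α β x (t+1) (q + ((s+1 : ℕ) : ℂ) + 1)
      = g α β x t (q + (s : ℂ) + 1) - g α β x t (q + ((s+1 : ℕ) : ℂ) + 1) := by
  have hb : q + ((s+1 : ℕ) : ℂ) + 1 = (q + (s : ℂ) + 1) + 1 := by push_cast; ring
  set b := q + (s : ℂ) + 1 with hbdef
  rw [hb]
  unfold g
  have e1 : α + ((t+1 : ℕ) : ℂ) = α + (t : ℂ) + 1 := by push_cast; ring
  have e2 : α + β + ((t+1 : ℕ) : ℂ) = α + β + (t : ℂ) + 1 := by push_cast; ring
  rw [e1, e2]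
  have hc : ∀ k : ℕ, (α + β + (t : ℂ)) + (k : ℂ) ≠ 0 := by
    intro k
    have := hαβ (t + k)
    push_cast at this
    intro h; apply this; linear_combination h
  rw [contig (α + (t:ℂ)) b x hx hc, cst_succ]
  unfold fstep
  ring

/-- matrix at stage t -/
def NM (n : ℕ) (α β x : ℂ) (p : Fin n → ℂ) (t : ℕ) : Matrix (Fin n) (Fin n) ℂ :=
  Matrix.of fun i j =>
    g α β x (min t (n - 1 - (j:ℕ))) (β + p i + (((j:ℕ) + min t (n - 1 - (j:ℕ)) : ℕ) : ℂ) + 1)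

/-- elementary column operation matrix -/
def EM (n t : ℕ) : Matrix (Fin n) (Fin n) ℂ :=
  Matrix.of fun j' j => (if j' = j then (1:ℂ) else 0) +
    (if ((j':ℕ) = (j:ℕ)+1 ∧ (j:ℕ) + t + 2 ≤ n) then (-1:ℂ) else 0)

lemma det_EM (n t : ℕ) : (EM n t).det = 1 := by
  have h : (EM n t).BlockTriangular OrderDual.toDual := by
    intro i j hij
    have hij' : i < j := hij
    simp only [EM, Matrix.of_apply]
    rw [if_neg (by exact fun h => absurd h (Fin.ne_of_lt hij')),
      if_neg (by rintro ⟨h1, -⟩; omega)]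
    ring
  rw [Matrix.det_of_lowerTriangular _ h]
  apply Finset.prod_eq_one
  intro j _
  simp only [EM, Matrix.of_apply]
  have hneg : ¬((j:ℕ) = (j:ℕ) + 1 ∧ (j:ℕ) + t + 2 ≤ n) := by rintro ⟨h1, -⟩; omega
  simp [hneg]

lemma NM_step (n : ℕ) (α β x : ℂ) (hx : ‖x‖ < 1)
    (hαβ : ∀ k : ℕ, α + β + (k:ℂ) ≠ 0) (p : Fin n → ℂ) (t : ℕ) :
    NM n α β x p (t+1) = NM n α β x p t * EM n t := by
  ext i j
  rw [Matrix.mul_apply]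
  have expand : ∀ j' : Fin n, NM n α β x p t i j' * EM n t j' j
      = (if j' = j then NM n α β x p t i j' else 0)
        + (if ((j':ℕ) = (j:ℕ)+1 ∧ (j:ℕ) + t + 2 ≤ n) then -(NM n α β x p t i j') else 0) := by
    intro j'
    simp only [EM, Matrix.of_apply]
    split_ifs <;> ring
  rw [Finset.sum_congr rfl fun j' _ => expand j', Finset.sum_add_distrib,
    Finset.sum_ite_eq' Finset.univ j, if_pos (Finset.mem_univ j)]
  by_cases hcond : (j:ℕ) + t + 2 ≤ n
  · have hj1 : (j:ℕ) + 1 < n := by omega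
    set j1 : Fin n := ⟨(j:ℕ)+1, hj1⟩ with hj1def
    have hrw : ∀ j' : Fin n,
        (if ((j':ℕ) = (j:ℕ)+1 ∧ (j:ℕ) + t + 2 ≤ n) then -(NM n α β x p t i j') else 0)
          = (if j' = j1 then -(NM n α β x p t i j') else 0) := by
      intro j'
      congr 1
      simp only [eq_iff_iff]
      constructor
      · rintro ⟨h1, -⟩; exact Fin.ext h1
      · intro h; exact ⟨by rw [h], hcond⟩
    rw [Finset.sum_congr rfl fun j' _ => hrw j', Finset.sum_ite_eq' Finset.univ j1,
      if_pos (Finset.mem_univ j1)]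
    simp only [NM, Matrix.of_apply]
    have hm1 : min (t+1) (n - 1 - (j:ℕ)) = t+1 := by omega
    have hm2 : min t (n - 1 - (j:ℕ)) = t := by omega
    have hm3 : min t (n - 1 - (j1:ℕ)) = t := by simp only [hj1def]; omega
    rw [hm1, hm2, hm3]
    have hs1 : (j:ℕ) + (t+1) = ((j:ℕ) + t) + 1 := by omega
    have hs2 : (j1:ℕ) + t = ((j:ℕ) + t) + 1 := by simp only [hj1def]; omega
    rw [hs1, hs2]
    have := gstep α β x hx hαβ t ((j:ℕ) + t) (β + p i)
    push_cast at this ⊢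
    linear_combination this
  · have hz : ∀ j' : Fin n,
        (if ((j':ℕ) = (j:ℕ)+1 ∧ (j:ℕ) + t + 2 ≤ n) then -(NM n α β x p t i j') else 0) = 0 := by
      intro j'
      rw [if_neg (by rintro ⟨-, h⟩; exact hcond h)]
    rw [Finset.sum_congr rfl fun j' _ => hz j', Finset.sum_const_zero, add_zero]
    simp only [NM, Matrix.of_apply]
    have hm : min (t+1) (n - 1 - (j:ℕ)) = min t (n - 1 - (j:ℕ)) := by omega
    rw [hm]

lemma det_NM (n : ℕ) (α β x : ℂ) (hx : ‖x‖ < 1)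
    (hαβ : ∀ k : ℕ, α + β + (k:ℂ) ≠ 0) (p : Fin n → ℂ) (t : ℕ) :
    (NM n α β x p 0).det = (NM n α β x p t).det := by
  induction t with
  | zero => rfl
  | succ t ih => rw [ih, NM_step n α β x hx hαβ p t, Matrix.det_mul, det_EM, mul_one]

lemma prod_prod (f : ℕ → ℂ) (n : ℕ) :
    ∏ m ∈ Finset.range n, ∏ k ∈ Finset.range m, f k
      = ∏ k ∈ Finset.range n, f k ^ (n - 1 - k) := by
  induction n with
  | zero => simp
  | succ n ih =>
    rw [Finset.prod_range_succ, ih, ← Finset.prod_mul_distrib]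
    rw [Finset.prod_range_succ (fun k => f k ^ (n + 1 - 1 - k))]
    simp only [Nat.add_sub_cancel, Nat.sub_self, pow_zero, mul_one]
    refine Finset.prod_congr rfl fun k hk => ?_
    rw [Finset.mem_range] at hk
    rw [← pow_succ]
    congr 1
    omega

lemma sum_m_sub (m : ℕ) : ∑ k ∈ Finset.range m, (m - k) = (m+1) * m / 2 := by
  induction m with
  | zero => simp
  | succ M ih =>
    rw [Finset.sum_range_succ]
    have h : ∀ k ∈ Finset.range M, (M + 1 - k) = (M - k) + 1 := fun k hk => by
      rw [Finset.mem_range] at hk; omega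
    rw [Finset.sum_congr rfl h, Finset.sum_add_distrib, ih]
    simp only [Finset.sum_const, Finset.card_range, smul_eq_mul, mul_one]
    have hr : (M+1+1)*(M+1) = (M+1)*M + 2*(M+1) := by ring
    omega

lemma const_eval (n : ℕ) (hn : 1 ≤ n) (α β x : ℂ) :
    ∏ j : Fin n, cst α β x (n - 1 - (j:ℕ))
      = (-1:ℂ)^(n*(n-1)/2) * x^(n*(n-1)/2)
          * ∏ k ∈ Finset.Icc 1 (n-1), ((α + (k:ℂ) - 1)/(α + β + (k:ℂ) - 1))^(n-k) := by
  obtain ⟨m, rfl⟩ : ∃ m, n = m + 1 := ⟨n - 1, by omega⟩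
  simp only [Nat.add_sub_cancel]
  have h1 : ∏ j : Fin (m+1), cst α β x (m - (j:ℕ))
      = ∏ j ∈ Finset.range (m+1), cst α β x (m - j) :=
    Fin.prod_univ_eq_prod_range (fun j => cst α β x (m - j)) (m+1)
  have h2 := Finset.prod_range_reflect (cst α β x) (m+1)
  simp only [Nat.add_sub_cancel] at h2
  have h3 := prod_prod (fstep α β x) (m+1)
  simp only [Nat.add_sub_cancel] at h3
  rw [h1, h2]
  show ∏ j ∈ Finset.range (m+1), ∏ k ∈ Finset.range j, fstep α β x k = _
  rw [h3, Finset.prod_range_succ, Nat.sub_self, pow_zero, mul_one]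
  have h4 : ∀ k ∈ Finset.range m, fstep α β x k ^ (m - k)
      = (-x) ^ (m-k) * ((α + (k:ℂ))/(α + β + (k:ℂ))) ^ (m-k) := by
    intro k _
    rw [← mul_pow]
    congr 1
    unfold fstep; ring
  rw [Finset.prod_congr rfl h4, Finset.prod_mul_distrib, Finset.prod_pow_eq_pow_sum,
    sum_m_sub, neg_pow]
  congr 1
  have h5 : Finset.Icc 1 m = Finset.Ico 1 (m+1) := (Finset.Ico_add_one_right_eq_Icc 1 m).symm
  rw [h5, Finset.prod_Ico_eq_prod_range]
  simp only [Nat.add_sub_cancel]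
  refine Finset.prod_congr rfl fun i hi => ?_
  rw [Finset.mem_range] at hi
  have e1 : α + ((1+i : ℕ):ℂ) - 1 = α + i := by push_cast; ring
  have e2 : α + β + ((1+i : ℕ):ℂ) - 1 = α + β + i := by push_cast; ring
  rw [e1, e2, show m + 1 - (1+i) = m - i from by omega]

end HypAux

/-- Lemma A: column-reduction identity for determinants of hypergeometric functions. -/
theorem statement13 (n : ℕ) (hn : 1 ≤ n) (α β : ℂ)
    (hc : ∀ m : ℤ, m ≤ 0 → α + β ≠ (m : ℂ))
    (hα : ∀ k : ℕ, 1 ≤ k → k ≤ n - 1 → α ≠ 1 - (k : ℂ))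
    (hαβ : ∀ k : ℕ, 1 ≤ k → k ≤ n - 1 → α + β ≠ 1 - (k : ℂ))
    (p : Fin n → ℂ) (r : ℝ) (hr : 0 < r) (hr1 : r < 1) :
    Matrix.det (Matrix.of fun i j : Fin n =>
        hyp2F1 α (β + p i + ((j : ℕ) : ℂ) + 1) (α + β) (1 - (r : ℂ) ^ 2))
      = (-1 : ℂ) ^ (n * (n - 1) / 2) * (1 - (r : ℂ) ^ 2) ^ (n * (n - 1) / 2)
        * (∏ k ∈ Finset.Icc 1 (n - 1),
            ((α + (k : ℂ) - 1) / (α + β + (k : ℂ) - 1)) ^ (n - k))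
        * Matrix.det (Matrix.of fun i j : Fin n =>
            hyp2F1 (α + (n : ℂ) - 1 - ((j : ℕ) : ℂ)) (β + p i + (n : ℂ))
              (α + β + (n : ℂ) - 1 - ((j : ℕ) : ℂ)) (1 - (r : ℂ) ^ 2)) := by
  classical
  set x : ℂ := 1 - (r : ℂ) ^ 2 with hxdef
  have hx : ‖x‖ < 1 := by
    have hxr : x = ((1 - r^2 : ℝ) : ℂ) := by rw [hxdef]; push_cast; ring
    rw [hxr, Complex.norm_real, Real.norm_eq_abs, abs_of_pos (by nlinarith)]
    nlinarith
  have hαβ' : ∀ k : ℕ, α + β + (k:ℂ) ≠ 0 := by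
    intro k h
    refine hc (-(k:ℤ)) (by omega) ?_
    push_cast
    linear_combination h
  -- Step A : the LHS matrix is `NM 0`
  have hA : (Matrix.of fun i j : Fin n =>
      hyp2F1 α (β + p i + ((j:ℕ):ℂ) + 1) (α+β) x) = HypAux.NM n α β x p 0 := by
    ext i j
    simp only [HypAux.NM, HypAux.g, HypAux.cst, Matrix.of_apply, Nat.zero_min,
      Finset.range_zero, Finset.prod_empty, one_mul, Nat.cast_zero, add_zero, Nat.add_zero]
  -- Step C : rewrite `NM (n-1)` as a column-scaled version of the RHS matrix
  have hC : HypAux.NM n α β x p (n-1) = Matrix.of (fun i j : Fin n =>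
      HypAux.cst α β x (n-1-(j:ℕ)) *
        (Matrix.of fun i j : Fin n =>
          hyp2F1 (α + (n:ℂ) - 1 - ((j:ℕ):ℂ)) (β + p i + (n:ℂ))
            (α + β + (n:ℂ) - 1 - ((j:ℕ):ℂ)) x) i j) := by
    ext i j
    have hj : (j:ℕ) < n := j.isLt
    simp only [HypAux.NM, HypAux.g, Matrix.of_apply]
    have hm : min (n-1) (n-1-(j:ℕ)) = n-1-(j:ℕ) := by omega
    have hs : (j:ℕ) + (n-1-(j:ℕ)) = n-1 := by omega
    rw [hm, hs]
    have c1 : α + ((n-1-(j:ℕ) : ℕ) : ℂ) = α + (n:ℂ) - 1 - ((j:ℕ):ℂ) := by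
      rw [Nat.cast_sub (by omega), Nat.cast_sub (by omega)]
      push_cast; ring
    have c2 : α + β + ((n-1-(j:ℕ) : ℕ) : ℂ) = α + β + (n:ℂ) - 1 - ((j:ℕ):ℂ) := by
      rw [Nat.cast_sub (by omega), Nat.cast_sub (by omega)]
      push_cast; ring
    have c3 : β + p i + ((n-1 : ℕ):ℂ) + 1 = β + p i + (n:ℂ) := by
      rw [Nat.cast_sub (by omega)]
      push_cast; ring
    rw [c1, c2, c3]
  calc Matrix.det (Matrix.of fun i j : Fin n =>
        hyp2F1 α (β + p i + ((j:ℕ):ℂ) + 1) (α+β) x)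
      = (HypAux.NM n α β x p 0).det := by rw [hA]
    _ = (HypAux.NM n α β x p (n-1)).det := HypAux.det_NM n α β x hx hαβ' p (n-1)
    _ = (∏ j : Fin n, HypAux.cst α β x (n-1-(j:ℕ)))
          * Matrix.det (Matrix.of fun i j : Fin n =>
            hyp2F1 (α + (n:ℂ) - 1 - ((j:ℕ):ℂ)) (β + p i + (n:ℂ))
              (α + β + (n:ℂ) - 1 - ((j:ℕ):ℂ)) x) := by
        rw [hC, Matrix.det_mul_row]
    _ = _ := by
        have hce := HypAux.const_eval n hn α β x
        rw [hce]

end
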